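/- For λ ∈ Γ_{k-1} ⊂ ℝⁿ with 2 ≤ k ≤ n, assuming the Newton–Maclaurin inequalities σ_k σ_{k-2}/σ_{k-1}² ≤ ((k−1)/k)·((n−k+1)/(n−k+2)) and σ_{k-1}σ_{ℓ-1}/(σ_ℓ σ_{k-2}) ≤ (n−k+2)/(n−ℓ+1) for 1 ≤ ℓ ≤ k−2, the trace sum Σ_i G^{ii} of the linearized operator G = σ_k/σ_{k-1} − Σ_{ℓ=0}^{k-2} α_ℓ σ_ℓ/σ_{k-1} with α_ℓ ≥ 0 satisfies Σ_{i=1}^n G^{ii} ≥ (n−k+1)/k. -/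

import Mathlib

/-- The m-th elementary symmetric polynomial of x ∈ ℝⁿ. -/
noncomputable def esymm (n m : ℕ) (x : Fin n → ℝ) : ℝ :=
  ∑ s ∈ Finset.powersetCard m (Finset.univ : Finset (Fin n)), ∏ i ∈ s, x i

/-- The Gårding cone Γ_k = {λ ∈ ℝⁿ : σ_j(λ) > 0 for 1 ≤ j ≤ k}. -/
def Gamma (n k : ℕ) : Set (Fin n → ℝ) :=
  {x | ∀ j : ℕ, 1 ≤ j → j ≤ k → 0 < esymm n j x}

open Finset

lemma esymm_zero' (n : ℕ) (x : Fin n → ℝ) : esymm n 0 x = 1 := by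
  simp [esymm]

/-- The linearization (differential) of `esymm n m` at `x`. -/
noncomputable def esymmD (n m : ℕ) (x : Fin n → ℝ) : (Fin n → ℝ) →L[ℝ] ℝ :=
  ∑ s ∈ powersetCard m (univ : Finset (Fin n)),
    ∑ j ∈ s, (∏ t ∈ s.erase j, x t) • (ContinuousLinearMap.proj j : (Fin n → ℝ) →L[ℝ] ℝ)

lemma hasFDerivAt_esymm (n m : ℕ) (x : Fin n → ℝ) :
    HasFDerivAt (esymm n m) (esymmD n m x) x := by
  apply HasFDerivAt.fun_sum
  intro s _
  exact HasFDerivAt.finset_prod (fun j _ => hasFDerivAt_apply j x)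

lemma esymmD_apply (n m : ℕ) (x : Fin n → ℝ) (i : Fin n) :
    esymmD n m x (Pi.single i 1)
      = ∑ s ∈ powersetCard m (univ : Finset (Fin n)),
          if i ∈ s then ∏ t ∈ s.erase i, x t else 0 := by
  simp only [esymmD, ContinuousLinearMap.sum_apply, ContinuousLinearMap.smul_apply,
    ContinuousLinearMap.proj_apply, smul_eq_mul]
  refine Finset.sum_congr rfl fun s _ => ?_
  rw [← Finset.sum_ite_eq s i (fun j => ∏ t ∈ s.erase j, x t)]
  refine Finset.sum_congr rfl fun j hj => ?_
  rcases eq_or_ne j i with rfl | h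
  · simp
  · simp [Pi.single_apply, h, h.symm]

lemma sum_esymmD (n m : ℕ) (hm : 1 ≤ m) (x : Fin n → ℝ) :
    ∑ i : Fin n, esymmD n m x (Pi.single i 1)
      = (n - (m-1) : ℕ) * esymm n (m-1) x := by
  simp only [esymmD_apply]
  rw [Finset.sum_comm]
  have h1 : ∀ s : Finset (Fin n), (∑ i : Fin n, if i ∈ s then ∏ t ∈ s.erase i, x t else 0)
      = ∑ i ∈ s, ∏ t ∈ s.erase i, x t := by
    intro s
    rw [Finset.sum_ite_mem]
    simp
  simp only [h1]
  have hsig := Finset.sum_sigma' (powersetCard m (univ : Finset (Fin n))) (fun s => s)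
    (fun s i => ∏ t ∈ s.erase i, x t)
  refine hsig.trans ?_
  rw [Finset.sum_nbij' (i := fun p => (⟨p.1.erase p.2, p.2⟩ : Σ _ : Finset (Fin n), Fin n))
    (j := fun p => (⟨insert p.2 p.1, p.2⟩ : Σ _ : Finset (Fin n), Fin n))
    (t := (powersetCard (m-1) (univ : Finset (Fin n))).sigma (fun t => univ \ t))
    (g := fun q => ∏ t ∈ q.1, x t)]
  · rw [Finset.sum_sigma]
    rw [esymm, Finset.mul_sum]
    refine Finset.sum_congr rfl fun t ht => ?_
    simp only [Finset.mem_powersetCard_univ] at ht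
    simp [Finset.sum_const, Finset.card_univ_diff, ht, mul_comm]
  · rintro ⟨s, i⟩ hp
    simp only [Finset.mem_sigma, Finset.mem_powersetCard_univ] at hp ⊢
    refine ⟨?_, ?_⟩
    · rw [Finset.card_erase_of_mem hp.2, hp.1]
    · simp [Finset.mem_sdiff]
  · rintro ⟨t, i⟩ hp
    simp only [Finset.mem_sigma, Finset.mem_powersetCard_univ, Finset.mem_sdiff] at hp ⊢
    refine ⟨?_, Finset.mem_insert_self _ _⟩
    · rw [Finset.card_insert_of_notMem hp.2.2, hp.1]
      omega
  · rintro ⟨s, i⟩ hp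
    simp only [Finset.mem_sigma] at hp
    simp [Finset.insert_erase hp.2]
  · rintro ⟨t, i⟩ hp
    simp only [Finset.mem_sigma, Finset.mem_sdiff] at hp
    simp [Finset.erase_insert hp.2.2]
  · rintro ⟨s, i⟩ hp
    rfl

lemma hasFDerivAt_div' {E : Type*} [NormedAddCommGroup E] [NormedSpace ℝ E] {f g : E → ℝ}
    {f' g' : E →L[ℝ] ℝ} {x : E} (hf : HasFDerivAt f f' x) (hg : HasFDerivAt g g' x)
    (h0 : g x ≠ 0) :
    HasFDerivAt (fun y => f y / g y) ((1/(g x)^2) • (g x • f' - f x • g')) x := by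
  have h1 : HasFDerivAt (fun y => (g y)⁻¹) ((-((g x)^2)⁻¹) • g') x :=
    (hasDerivAt_inv h0).comp_hasFDerivAt x hg
  have h2 := hf.fun_mul h1
  have h3 : (fun y => f y / g y) = fun y => f y * (g y)⁻¹ := by
    funext y; rw [div_eq_mul_inv]
  rw [h3]
  refine h2.congr_fderiv ?_
  ext v
  simp only [ContinuousLinearMap.smul_apply, ContinuousLinearMap.sub_apply,
    ContinuousLinearMap.add_apply, smul_eq_mul, ContinuousLinearMap.coe_smul', Pi.smul_apply,
    ContinuousLinearMap.coe_sub', Pi.sub_apply, ContinuousLinearMap.coe_add', Pi.add_apply]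
  field_simp
  ring

set_option maxHeartbeats 1000000 in
/-- for λ ∈ Γ_{k-1}, assuming the Newton–Maclaurin inequalities, the trace sum
Σ_i G^{ii} of the linearized operator of G = σ_k/σ_{k-1} − Σ α_ℓ σ_ℓ/σ_{k-1} (with α_ℓ ≥ 0)
satisfies Σ_i G^{ii} ≥ (n−k+1)/k. -/
theorem stmt_9 (n k : ℕ) (hk : 2 ≤ k) (hkn : k ≤ n) (α : ℕ → ℝ)
    (hα : ∀ ℓ, ℓ ≤ k - 2 → 0 ≤ α ℓ) (x : Fin n → ℝ) (hx : x ∈ Gamma n (k-1))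
    (hNM1 : esymm n k x * esymm n (k-2) x / esymm n (k-1) x ^ 2
      ≤ (((k:ℝ)-1)/(k:ℝ)) * (((n:ℝ)-(k:ℝ)+1)/((n:ℝ)-(k:ℝ)+2)))
    (hNM2 : ∀ ℓ : ℕ, 1 ≤ ℓ → ℓ ≤ k - 2 →
      esymm n (k-1) x * esymm n (ℓ-1) x / (esymm n ℓ x * esymm n (k-2) x)
        ≤ ((n:ℝ)-(k:ℝ)+2)/((n:ℝ)-(ℓ:ℝ)+1)) :
    ((n:ℝ)-(k:ℝ)+1)/(k:ℝ)
      ≤ ∑ i : Fin n, fderiv ℝ (fun y => esymm n k y / esymm n (k-1) y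
            - ∑ ℓ ∈ Finset.range (k-1), α ℓ * (esymm n ℓ y / esymm n (k-1) y))
          x (Pi.single i 1) := by
  classical
  have hE : ∀ j, j ≤ k-1 → 0 < esymm n j x := by
    intro j hj
    rcases Nat.eq_zero_or_pos j with h0 | h1
    · rw [h0, esymm_zero']; norm_num
    · exact hx j h1 hj
  have hd0 : 0 < esymm n (k-1) x := hE (k-1) le_rfl
  have he2 : 0 < esymm n (k-2) x := hE (k-2) (by omega)
  have hkR : (2:ℝ) ≤ (k:ℝ) := by exact_mod_cast hk
  have hknR : (k:ℝ) ≤ (n:ℝ) := by exact_mod_cast hkn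
  have hK0 : (0:ℝ) < (k:ℝ) := by linarith
  have hNK2 : (0:ℝ) < (n:ℝ) - k + 2 := by linarith
  have hNK1 : (0:ℝ) ≤ (n:ℝ) - k + 1 := by linarith
  have hdiv : ∀ m : ℕ, HasFDerivAt (fun y => esymm n m y / esymm n (k-1) y)
      ((1/(esymm n (k-1) x)^2) • ((esymm n (k-1) x) • esymmD n m x
        - (esymm n m x) • esymmD n (k-1) x)) x :=
    fun m => hasFDerivAt_div' (hasFDerivAt_esymm n m x) (hasFDerivAt_esymm n (k-1) x) hd0.ne'
  have hG : HasFDerivAt (fun y => esymm n k y / esymm n (k-1) y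
      - ∑ ℓ ∈ Finset.range (k-1), α ℓ * (esymm n ℓ y / esymm n (k-1) y))
      (((1/(esymm n (k-1) x)^2) • ((esymm n (k-1) x) • esymmD n k x
          - (esymm n k x) • esymmD n (k-1) x))
        - ∑ ℓ ∈ Finset.range (k-1), α ℓ • ((1/(esymm n (k-1) x)^2) •
            ((esymm n (k-1) x) • esymmD n ℓ x - (esymm n ℓ x) • esymmD n (k-1) x))) x :=
    (hdiv k).sub (HasFDerivAt.fun_sum fun ℓ _ => (hdiv ℓ).const_mul (α ℓ))
  rw [hG.fderiv]
  have key : (∑ i : Fin n, (((1/(esymm n (k-1) x)^2) • ((esymm n (k-1) x) • esymmD n k x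
          - (esymm n k x) • esymmD n (k-1) x))
        - ∑ ℓ ∈ Finset.range (k-1), α ℓ • ((1/(esymm n (k-1) x)^2) •
            ((esymm n (k-1) x) • esymmD n ℓ x - (esymm n ℓ x) • esymmD n (k-1) x)))
          (Pi.single i 1))
      = (1/(esymm n (k-1) x)^2) * ((esymm n (k-1) x)
            * (∑ i : Fin n, esymmD n k x (Pi.single i 1))
          - (esymm n k x) * (∑ i : Fin n, esymmD n (k-1) x (Pi.single i 1)))
        - ∑ ℓ ∈ Finset.range (k-1), α ℓ * ((1/(esymm n (k-1) x)^2) * ((esymm n (k-1) x)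
            * (∑ i : Fin n, esymmD n ℓ x (Pi.single i 1))
          - (esymm n ℓ x) * (∑ i : Fin n, esymmD n (k-1) x (Pi.single i 1)))) := by
    simp only [ContinuousLinearMap.sub_apply, ContinuousLinearMap.sum_apply,
      ContinuousLinearMap.smul_apply, smul_eq_mul]
    rw [Finset.sum_sub_distrib]
    congr 1
    · rw [← Finset.mul_sum]
      congr 1
      rw [Finset.sum_sub_distrib, ← Finset.mul_sum, ← Finset.mul_sum]
    · rw [Finset.sum_comm]
      refine Finset.sum_congr rfl fun ℓ _ => ?_
      rw [← Finset.mul_sum]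
      congr 1
      rw [← Finset.mul_sum]
      congr 1
      rw [Finset.sum_sub_distrib, ← Finset.mul_sum, ← Finset.mul_sum]
  rw [key]
  have hDk : ∑ i : Fin n, esymmD n k x (Pi.single i 1)
      = ((n:ℝ) - k + 1) * esymm n (k-1) x := by
    rw [sum_esymmD n k (by omega)]
    congr 1
    rw [Nat.cast_sub (by omega : k-1 ≤ n), Nat.cast_sub (by omega : 1 ≤ k)]
    push_cast
    ring
  have hDk1 : ∑ i : Fin n, esymmD n (k-1) x (Pi.single i 1)
      = ((n:ℝ) - k + 2) * esymm n (k-2) x := by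
    rw [sum_esymmD n (k-1) (by omega)]
    have h12 : k - 1 - 1 = k - 2 := by omega
    rw [h12]
    congr 1
    rw [Nat.cast_sub (by omega : k-2 ≤ n), Nat.cast_sub (by omega : 2 ≤ k)]
    push_cast
    ring
  rw [hDk, hDk1]
  -- bound the correction sum by 0
  have hT : ∑ ℓ ∈ Finset.range (k-1), α ℓ * ((1/(esymm n (k-1) x)^2) * ((esymm n (k-1) x)
        * (∑ i : Fin n, esymmD n ℓ x (Pi.single i 1))
      - (esymm n ℓ x) * (((n:ℝ) - k + 2) * esymm n (k-2) x))) ≤ 0 := by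
    refine Finset.sum_nonpos fun ℓ hℓ => ?_
    rw [Finset.mem_range] at hℓ
    have hℓk2 : ℓ ≤ k - 2 := by omega
    have hαℓ := hα ℓ hℓk2
    have hinv : (0:ℝ) ≤ 1/(esymm n (k-1) x)^2 := by positivity
    rcases Nat.eq_zero_or_pos ℓ with rfl | h1
    · have hD0 : ∑ i : Fin n, esymmD n 0 x (Pi.single i 1) = 0 := by
        simp [esymmD_apply]
      rw [hD0, esymm_zero']
      have : (esymm n (k-1) x) * 0 - 1 * (((n:ℝ) - k + 2) * esymm n (k-2) x) ≤ 0 := by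
        nlinarith
      exact mul_nonpos_of_nonneg_of_nonpos hαℓ (mul_nonpos_of_nonneg_of_nonpos hinv this)
    · have hDl : ∑ i : Fin n, esymmD n ℓ x (Pi.single i 1)
          = ((n:ℝ) - ℓ + 1) * esymm n (ℓ-1) x := by
        rw [sum_esymmD n ℓ h1]
        congr 1
        rw [Nat.cast_sub (by omega : ℓ-1 ≤ n), Nat.cast_sub h1]
        push_cast
        ring
      rw [hDl]
      have hel : 0 < esymm n ℓ x := hE ℓ (by omega)
      have hel1 : 0 < esymm n (ℓ-1) x := hE (ℓ-1) (by omega)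
      have hden : 0 < esymm n ℓ x * esymm n (k-2) x := mul_pos hel he2
      have hlR : (ℓ:ℝ) ≤ (n:ℝ) := by exact_mod_cast (by omega : ℓ ≤ n)
      have hnl : (0:ℝ) < (n:ℝ) - ℓ + 1 := by linarith
      have hnm := hNM2 ℓ h1 hℓk2
      rw [div_le_div_iff₀ hden hnl] at hnm
      have hbr : (esymm n (k-1) x) * (((n:ℝ) - ℓ + 1) * esymm n (ℓ-1) x)
          - (esymm n ℓ x) * (((n:ℝ) - k + 2) * esymm n (k-2) x) ≤ 0 := by nlinarith
      exact mul_nonpos_of_nonneg_of_nonpos hαℓ (mul_nonpos_of_nonneg_of_nonpos hinv hbr)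
  -- bound the main term from below
  have hA : ((n:ℝ) - k + 1)/(k:ℝ)
      ≤ (1/(esymm n (k-1) x)^2) * ((esymm n (k-1) x) * (((n:ℝ) - k + 1) * esymm n (k-1) x)
          - (esymm n k x) * (((n:ℝ) - k + 2) * esymm n (k-2) x)) := by
    have heq : (1/(esymm n (k-1) x)^2) * ((esymm n (k-1) x)
          * (((n:ℝ) - k + 1) * esymm n (k-1) x)
          - (esymm n k x) * (((n:ℝ) - k + 2) * esymm n (k-2) x))
        = ((n:ℝ) - k + 1) - ((n:ℝ) - k + 2)
            * (esymm n k x * esymm n (k-2) x / (esymm n (k-1) x)^2) := by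
      field_simp
    rw [heq]
    have h5 : ((n:ℝ) - k + 2) * (esymm n k x * esymm n (k-2) x / (esymm n (k-1) x)^2)
        ≤ ((n:ℝ) - k + 2) * ((((k:ℝ)-1)/(k:ℝ)) * (((n:ℝ)-(k:ℝ)+1)/((n:ℝ)-(k:ℝ)+2))) :=
      mul_le_mul_of_nonneg_left hNM1 hNK2.le
    have h6 : ((n:ℝ) - k + 2) * ((((k:ℝ)-1)/(k:ℝ)) * (((n:ℝ)-(k:ℝ)+1)/((n:ℝ)-(k:ℝ)+2)))
        = (((k:ℝ)-1)/(k:ℝ)) * ((n:ℝ)-(k:ℝ)+1) := by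
      field_simp
    have h7 : ((n:ℝ) - k + 1) - (((k:ℝ)-1)/(k:ℝ)) * ((n:ℝ)-(k:ℝ)+1)
        = ((n:ℝ) - k + 1)/(k:ℝ) := by
      field_simp
      ring
    linarith
  linarith
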